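/- arXiv:2208.07752 — 6 statements merged into one kernel-verified Lean document; each statement's English description precedes it below -/
import Mathlib

section
/- Let f : (-ε₁, ε₁)^d → (-ε₀, ε₀) be Lipschitz with constant C_f, and let U_< = {(x₀, x) : x ∈ (-ε₁,ε₁)^d, x₀ < f(x)} ⊆ ℝ^{d+1}. Then for any two points y = (y₀, ȳ) and z = (z₀, z̄) in U_<, there exists a piecewise C¹ curve σ : [0,1] → U_< from y to z whose Euclidean length satisfies L(σ) ≤ √(1 + C_f²) · ‖y - z‖ + |y₀ - z₀|. In particular, U_< is quasiconvex. -/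
open Set

noncomputable section

/-- Euclidean length of a curve on `[0,1]`. -/
def euclLength {m : ℕ} (σ : ℝ → EuclideanSpace ℝ (Fin m)) : ℝ :=
  ∫ s in (0:ℝ)..1, ‖deriv σ s‖

/-- A piecewise `C¹` curve on `[0,1]`: continuous, and `C¹` away from finitely many points. -/
def PiecewiseC1On {m : ℕ} (σ : ℝ → EuclideanSpace ℝ (Fin m)) : Prop :=
  ContinuousOn σ (Icc 0 1) ∧
    ∃ T : Finset ℝ, ∀ s ∈ Icc (0:ℝ) 1 \ (T : Set ℝ), ∃ ε > (0:ℝ),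
      ContDiffOn ℝ 1 σ (Ioo (s - ε) (s + ε))

lemma affine_hasDerivAt' {E : Type*} [NormedAddCommGroup E] [NormedSpace ℝ E]
    (p v : E) (s : ℝ) : HasDerivAt (fun t : ℝ => p + t • v) v s := by
  simpa using ((hasDerivAt_id s).smul_const v).const_add p

lemma affine_contDiff' {E : Type*} [NormedAddCommGroup E] [NormedSpace ℝ E]
    (p v : E) : ContDiff ℝ 1 (fun t : ℝ => p + t • v) :=
  contDiff_const.add (contDiff_id.smul contDiff_const)

lemma box_aux (ε₁ p q s : ℝ) (hp : |p| < ε₁) (hq : |q| < ε₁) (h0 : 0 ≤ s) (h1 : s ≤ 1) :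
    |p + s * (q - p)| < ε₁ := by
  rw [abs_lt] at hp hq ⊢
  rcases h0.eq_or_lt with rfl | hs
  · simpa using hp
  · constructor <;> nlinarith [mul_pos hs (by linarith : (0:ℝ) < ε₁ - q),
      mul_pos hs (by linarith : (0:ℝ) < q + ε₁),
      mul_nonneg (by linarith : (0:ℝ) ≤ 1 - s) (by linarith : (0:ℝ) ≤ ε₁ - p),
      mul_nonneg (by linarith : (0:ℝ) ≤ 1 - s) (by linarith : (0:ℝ) ≤ p + ε₁)]

lemma norm_succ_eq {d : ℕ} (v : EuclideanSpace ℝ (Fin (d+1))) :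
    ‖v‖ = Real.sqrt ((v 0)^2 + ∑ i : Fin d, (v i.succ)^2) := by
  rw [EuclideanSpace.norm_eq, Fin.sum_univ_succ]
  simp [Real.norm_eq_abs, sq_abs]

lemma norm_sq_eq' {d : ℕ} (w : EuclideanSpace ℝ (Fin d)) :
    ‖w‖^2 = ∑ i, (w i)^2 := by
  rw [EuclideanSpace.norm_eq, Real.sq_sqrt (by positivity)]
  exact Finset.sum_congr rfl fun i _ => by rw [Real.norm_eq_abs, sq_abs]

/-- Quasiconvexity of the subgraph domain of a Lipschitz function
(proof of Proposition 5.3). -/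
theorem stmt3 {d : ℕ} (ε₀ ε₁ Cf : ℝ) (hε₀ : 0 < ε₀) (hε₁ : 0 < ε₁) (hCf : 0 < Cf)
    (f : EuclideanSpace ℝ (Fin d) → ℝ)
    (hmap : ∀ x : EuclideanSpace ℝ (Fin d), (∀ i, |x i| < ε₁) → |f x| < ε₀)
    (hLip : ∀ x y : EuclideanSpace ℝ (Fin d), (∀ i, |x i| < ε₁) → (∀ i, |y i| < ε₁) →
      |f x - f y| ≤ Cf * ‖x - y‖) :
    ∀ y z : EuclideanSpace ℝ (Fin (d+1)),
      ((∀ i : Fin d, |y i.succ| < ε₁) ∧ y 0 < f (WithLp.toLp 2 (fun i : Fin d => y i.succ))) →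
      ((∀ i : Fin d, |z i.succ| < ε₁) ∧ z 0 < f (WithLp.toLp 2 (fun i : Fin d => z i.succ))) →
      ∃ σ : ℝ → EuclideanSpace ℝ (Fin (d+1)),
        PiecewiseC1On σ ∧ σ 0 = y ∧ σ 1 = z ∧
        (∀ s ∈ Icc (0:ℝ) 1,
          (∀ i : Fin d, |σ s i.succ| < ε₁) ∧ σ s 0 < f (WithLp.toLp 2 (fun i : Fin d => σ s i.succ))) ∧
        euclLength σ ≤ Real.sqrt (1 + Cf ^ 2) * ‖y - z‖ + |y 0 - z 0| := by
  intro y z hy hz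
  obtain ⟨hyb, hy0⟩ := hy
  obtain ⟨hzb, hz0⟩ := hz
  have hsq1 : (1:ℝ) ≤ Real.sqrt (1 + Cf ^ 2) := by
    have h := Real.sqrt_le_sqrt (by nlinarith : (1:ℝ) ≤ 1 + Cf ^ 2)
    simpa using h
  obtain ⟨Yv, hYv⟩ : ∃ v : EuclideanSpace ℝ (Fin d), v = WithLp.toLp 2 (fun i => y i.succ) := ⟨_, rfl⟩
  obtain ⟨Zv, hZv⟩ : ∃ v : EuclideanSpace ℝ (Fin d), v = WithLp.toLp 2 (fun i => z i.succ) := ⟨_, rfl⟩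
  obtain ⟨D, hD⟩ : ∃ v : EuclideanSpace ℝ (Fin d), v = Zv - Yv := ⟨_, rfl⟩
  have hYvi : ∀ i, Yv i = y i.succ := fun i => by rw [hYv]
  have hZvi : ∀ i, Zv i = z i.succ := fun i => by rw [hZv]
  have hDi : ∀ i, D i = z i.succ - y i.succ := fun i => by
    rw [hD, PiLp.sub_apply, hYvi, hZvi]
  have hyv0 : y 0 < f Yv := by rw [hYv]; exact hy0
  have hzv0 : z 0 < f Zv := by rw [hZv]; exact hz0
  have hyvb : ∀ i, |Yv i| < ε₁ := fun i => by rw [hYvi]; exact hyb i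
  have hzvb : ∀ i, |Zv i| < ε₁ := fun i => by rw [hZvi]; exact hzb i
  set b := ‖D‖ with hbdef
  have hb0 : (0:ℝ) ≤ b := norm_nonneg _
  set a := y 0 - z 0 with ha
  set c := Cf * b with hc
  have hc0 : (0:ℝ) ≤ c := mul_nonneg hCf.le hb0
  have hbsum : b^2 = ∑ i : Fin d, (z i.succ - y i.succ)^2 := by
    rw [hbdef, norm_sq_eq']
    exact Finset.sum_congr rfl fun i _ => by rw [hDi]
  have hyznorm : ‖y - z‖ = Real.sqrt (a^2 + b^2) := by
    rw [norm_succ_eq (y - z)]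
    have h1 : (y - z) 0 = a := by rw [PiLp.sub_apply, ha]
    have h2 : ∑ i : Fin d, ((y - z) i.succ)^2 = b^2 := by
      rw [hbsum]
      exact Finset.sum_congr rfl fun i _ => by rw [PiLp.sub_apply]; ring
    rw [h1, h2]
  have hbyz : b ≤ ‖y - z‖ := by
    rw [hyznorm]
    calc b = Real.sqrt (b^2) := (Real.sqrt_sq hb0).symm
    _ ≤ _ := Real.sqrt_le_sqrt (by nlinarith)
  have hXbox : ∀ s : ℝ, 0 ≤ s → s ≤ 1 →
      ∀ i : Fin d, |y i.succ + s * (z i.succ - y i.succ)| < ε₁ := fun s hs0 hs1 i =>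
    box_aux ε₁ _ _ s (hyb i) (hzb i) hs0 hs1
  have hfY : ∀ s : ℝ, 0 ≤ s → s ≤ 1 → ∀ X : EuclideanSpace ℝ (Fin d),
      (∀ i, X i = y i.succ + s * (z i.succ - y i.succ)) →
      f Yv - s * c ≤ f X := by
    intro s hs0 hs1 X hXi
    have boxX : ∀ i, |X i| < ε₁ := fun i => by rw [hXi i]; exact hXbox s hs0 hs1 i
    have hsub : X - Yv = s • D := by
      ext i
      rw [PiLp.sub_apply, PiLp.smul_apply, hXi i, hYvi i, hDi i, smul_eq_mul]
      ring
    have hnorm : ‖X - Yv‖ = s * b := by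
      rw [hsub, norm_smul, Real.norm_eq_abs, abs_of_nonneg hs0, ← hbdef]
    have hlip := hLip X Yv boxX hyvb
    rw [hnorm] at hlip
    have h2 : Cf * (s * b) = s * c := by rw [hc]; ring
    have h3 := abs_le.mp hlip
    linarith [h3.1]
  have hfZ : ∀ s : ℝ, 0 ≤ s → s ≤ 1 → ∀ X : EuclideanSpace ℝ (Fin d),
      (∀ i, X i = y i.succ + s * (z i.succ - y i.succ)) →
      f Zv - (1 - s) * c ≤ f X := by
    intro s hs0 hs1 X hXi
    have boxX : ∀ i, |X i| < ε₁ := fun i => by rw [hXi i]; exact hXbox s hs0 hs1 i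
    have hsub : X - Zv = (s - 1) • D := by
      ext i
      rw [PiLp.sub_apply, PiLp.smul_apply, hXi i, hZvi i, hDi i, smul_eq_mul]
      ring
    have hnorm : ‖X - Zv‖ = (1 - s) * b := by
      rw [hsub, norm_smul, Real.norm_eq_abs, abs_of_nonpos (by linarith), ← hbdef]
      ring
    have hlip := hLip X Zv boxX hzvb
    rw [hnorm] at hlip
    have h2 : Cf * ((1 - s) * b) = (1 - s) * c := by rw [hc]; ring
    have h3 := abs_le.mp hlip
    linarith [h3.1]
  by_cases hcase : c ≤ |a|
  · -- FAMILY A : straight segment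
    refine ⟨fun s => y + s • (z - y), ?_, by simp, by simp, ?_, ?_⟩
    · exact ⟨(affine_contDiff' y (z - y)).continuous.continuousOn,
        ∅, fun s _ => ⟨1, one_pos, (affine_contDiff' y (z - y)).contDiffOn⟩⟩
    · intro s hs
      obtain ⟨hs0, hs1⟩ := hs
      have hcomp : ∀ i : Fin d, (y + s • (z - y)) i.succ
          = y i.succ + s * (z i.succ - y i.succ) := fun i => by
        rw [PiLp.add_apply, PiLp.smul_apply, PiLp.sub_apply, smul_eq_mul]
      constructor
      · intro i
        show |(y + s • (z - y)) i.succ| < ε₁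
        rw [hcomp i]; exact hXbox s hs0 hs1 i
      · show (y + s • (z - y)) 0 < f (WithLp.toLp 2 (fun i => (y + s • (z - y)) i.succ))
        have h00 : (y + s • (z - y)) 0 = y 0 + s * (z 0 - y 0) := by
          rw [PiLp.add_apply, PiLp.smul_apply, PiLp.sub_apply, smul_eq_mul]
        rw [h00]
        rcases le_abs.mp hcase with hca | hca
        · have h1 := hfY s hs0 hs1 (WithLp.toLp 2 (fun i => (y + s • (z - y)) i.succ)) hcomp
          have h3 : 0 ≤ s * ((y 0 - z 0) - c) :=
            mul_nonneg hs0 (by have h := hca; rw [ha] at h; linarith)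
          linarith [hyv0, h1, h3]
        · have h1 := hfZ s hs0 hs1 (WithLp.toLp 2 (fun i => (y + s • (z - y)) i.succ)) hcomp
          have h3 : 0 ≤ (1 - s) * ((z 0 - y 0) - c) :=
            mul_nonneg (by linarith) (by have h := hca; rw [ha] at h; linarith)
          linarith [hzv0, h1, h3]
    · have hderiv : ∀ s : ℝ, deriv (fun t : ℝ => y + t • (z - y)) s = z - y :=
        fun s => (affine_hasDerivAt' y (z - y) s).deriv
      have hlen : euclLength (fun s : ℝ => y + s • (z - y)) = ‖z - y‖ := by
        simp only [euclLength, hderiv]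
        simp
      rw [hlen, norm_sub_rev]
      have h2 := mul_le_mul_of_nonneg_right hsq1 (norm_nonneg (y - z))
      rw [one_mul] at h2
      linarith [abs_nonneg a]
  · -- FAMILY B
    have hac : |a| < c := not_le.mp hcase
    have hcpos : (0:ℝ) < c := lt_of_le_of_lt (abs_nonneg a) hac
    obtain ⟨hacl, hacr⟩ := abs_lt.mp hac
    set t₁ := (a + c) / (2 * c) with ht₁
    have ht0 : (0:ℝ) < t₁ := div_pos (by linarith) (by linarith)
    have ht1 : t₁ < 1 := (div_lt_one (by linarith)).mpr (by linarith)
    obtain ⟨e0, he0⟩ : ∃ v : EuclideanSpace ℝ (Fin (d+1)),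
      v = EuclideanSpace.single (0 : Fin (d+1)) (1:ℝ) := ⟨_, rfl⟩
    have he00 : e0 0 = 1 := by rw [he0]; simp [EuclideanSpace.single_apply]
    have he0s : ∀ i : Fin d, e0 i.succ = 0 := fun i => by
      rw [he0]; simp [EuclideanSpace.single_apply, Fin.succ_ne_zero]
    obtain ⟨v₁, hv₁⟩ : ∃ v : EuclideanSpace ℝ (Fin (d+1)),
      v = (z - y) + (-c - (z 0 - y 0)) • e0 := ⟨_, rfl⟩
    obtain ⟨v₂, hv₂⟩ : ∃ v : EuclideanSpace ℝ (Fin (d+1)),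
      v = (z - y) + (c - (z 0 - y 0)) • e0 := ⟨_, rfl⟩
    obtain ⟨w, hw⟩ : ∃ v : EuclideanSpace ℝ (Fin (d+1)),
      v = y + (z 0 - c - y 0) • e0 := ⟨_, rfl⟩
    have hv₁0 : v₁ 0 = -c := by
      rw [hv₁, PiLp.add_apply, PiLp.sub_apply, PiLp.smul_apply, he00, smul_eq_mul]; ring
    have hv₂0 : v₂ 0 = c := by
      rw [hv₂, PiLp.add_apply, PiLp.sub_apply, PiLp.smul_apply, he00, smul_eq_mul]; ring
    have hw0 : w 0 = z 0 - c := by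
      rw [hw, PiLp.add_apply, PiLp.smul_apply, he00, smul_eq_mul]; ring
    have hv₁s : ∀ i : Fin d, v₁ i.succ = z i.succ - y i.succ := fun i => by
      rw [hv₁, PiLp.add_apply, PiLp.sub_apply, PiLp.smul_apply, he0s, smul_eq_mul]; ring
    have hv₂s : ∀ i : Fin d, v₂ i.succ = z i.succ - y i.succ := fun i => by
      rw [hv₂, PiLp.add_apply, PiLp.sub_apply, PiLp.smul_apply, he0s, smul_eq_mul]; ring
    have hws : ∀ i : Fin d, w i.succ = y i.succ := fun i => by
      rw [hw, PiLp.add_apply, PiLp.smul_apply, he0s, smul_eq_mul]; ring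
    have hA0 : ∀ s : ℝ, (y + s • v₁) 0 = y 0 - c * s := fun s => by
      rw [PiLp.add_apply, PiLp.smul_apply, hv₁0, smul_eq_mul]; ring
    have hB0 : ∀ s : ℝ, (w + s • v₂) 0 = z 0 - c * (1 - s) := fun s => by
      rw [PiLp.add_apply, PiLp.smul_apply, hw0, hv₂0, smul_eq_mul]; ring
    have hAs : ∀ (s : ℝ) (i : Fin d), (y + s • v₁) i.succ
        = y i.succ + s * (z i.succ - y i.succ) := fun s i => by
      rw [PiLp.add_apply, PiLp.smul_apply, hv₁s, smul_eq_mul]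
    have hBs : ∀ (s : ℝ) (i : Fin d), (w + s • v₂) i.succ
        = y i.succ + s * (z i.succ - y i.succ) := fun s i => by
      rw [PiLp.add_apply, PiLp.smul_apply, hv₂s, hws, smul_eq_mul]
    have hcne : c ≠ 0 := ne_of_gt hcpos
    have h2t : 2 * c * t₁ = a + c := by
      rw [ht₁]; field_simp
    have hglue : y + t₁ • v₁ = w + t₁ • v₂ := by
      ext i
      induction i using Fin.cases with
      | zero =>
        rw [hA0, hB0]
        rw [ha] at h2t
        linarith
      | succ i =>
        rw [hAs, hBs]
    refine ⟨fun s => if s ≤ t₁ then y + s • v₁ else w + s • v₂, ?_, ?_, ?_, ?_, ?_⟩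
    · constructor
      · refine (Continuous.if_le ?_ ?_ continuous_id continuous_const ?_).continuousOn
        · exact (affine_contDiff' y v₁).continuous
        · exact (affine_contDiff' w v₂).continuous
        · intro x hx
          subst hx
          exact hglue
      · refine ⟨{t₁}, fun s hs => ?_⟩
        obtain ⟨hsI, hsT⟩ := hs
        have hne : s ≠ t₁ := by simpa using hsT
        rcases hne.lt_or_gt with hlt | hgt
        · refine ⟨t₁ - s, by linarith, ((affine_contDiff' y v₁).contDiffOn).congr ?_⟩
          intro x hx
          have hxle : x ≤ t₁ := by
            rcases hx with ⟨_, hx2⟩; linarith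
          simp only [if_pos hxle]
        · refine ⟨s - t₁, by linarith, ((affine_contDiff' w v₂).contDiffOn).congr ?_⟩
          intro x hx
          have hxle : ¬ x ≤ t₁ := by
            rcases hx with ⟨hx1, _⟩; push_neg; linarith
          simp only [if_neg hxle]
    · show (if (0:ℝ) ≤ t₁ then y + (0:ℝ) • v₁ else w + (0:ℝ) • v₂) = y
      rw [if_pos ht0.le]; simp
    · show (if (1:ℝ) ≤ t₁ then y + (1:ℝ) • v₁ else w + (1:ℝ) • v₂) = z
      rw [if_neg (not_le.mpr ht1)]
      ext i
      induction i using Fin.cases with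
      | zero => rw [hB0]; ring
      | succ i => rw [hBs]; ring
    · intro s hs
      obtain ⟨hs0, hs1⟩ := hs
      have hcomp : ∀ i : Fin d, (if s ≤ t₁ then y + s • v₁ else w + s • v₂) i.succ
          = y i.succ + s * (z i.succ - y i.succ) := fun i => by
        by_cases hst : s ≤ t₁
        · rw [if_pos hst, hAs]
        · rw [if_neg hst, hBs]
      constructor
      · intro i
        show |(if s ≤ t₁ then y + s • v₁ else w + s • v₂) i.succ| < ε₁
        rw [hcomp i]; exact hXbox s hs0 hs1 i
      · show (if s ≤ t₁ then y + s • v₁ else w + s • v₂) 0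
          < f (WithLp.toLp 2 (fun i => (if s ≤ t₁ then y + s • v₁ else w + s • v₂) i.succ))
        by_cases hst : s ≤ t₁
        · rw [if_pos hst, hA0]
          have h1 := hfY s hs0 hs1 (WithLp.toLp 2 (fun i => (y + s • v₁) i.succ)) (fun i => hAs s i)
          linarith [hyv0, h1]
        · rw [if_neg hst, hB0]
          have h1 := hfZ s hs0 hs1 (WithLp.toLp 2 (fun i => (w + s • v₂) i.succ)) (fun i => hBs s i)
          linarith [hzv0, h1]
    · -- length
      set K := Real.sqrt (c^2 + b^2) with hK
      have hsumv₁ : ∑ i : Fin d, (v₁ i.succ)^2 = b^2 := by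
        rw [hbsum]
        exact Finset.sum_congr rfl fun i _ => by rw [hv₁s i]
      have hsumv₂ : ∑ i : Fin d, (v₂ i.succ)^2 = b^2 := by
        rw [hbsum]
        exact Finset.sum_congr rfl fun i _ => by rw [hv₂s i]
      have hKv₁ : ‖v₁‖ = K := by rw [norm_succ_eq v₁, hv₁0, hsumv₁, neg_sq]
      have hKv₂ : ‖v₂‖ = K := by rw [norm_succ_eq v₂, hv₂0, hsumv₂]
      have hderiv : ∀ s : ℝ, s ≠ t₁ →
          ‖deriv (fun t : ℝ => if t ≤ t₁ then y + t • v₁ else w + t • v₂) s‖ = K := by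
        intro s hne
        rcases hne.lt_or_gt with hlt | hgt
        · have hev : (fun t : ℝ => if t ≤ t₁ then y + t • v₁ else w + t • v₂)
              =ᶠ[nhds s] (fun t => y + t • v₁) := by
            filter_upwards [Iio_mem_nhds hlt] with x hx
            exact if_pos (le_of_lt hx)
          rw [hev.deriv_eq, (affine_hasDerivAt' y v₁ s).deriv, hKv₁]
        · have hev : (fun t : ℝ => if t ≤ t₁ then y + t • v₁ else w + t • v₂)
              =ᶠ[nhds s] (fun t => w + t • v₂) := by
            filter_upwards [Ioi_mem_nhds hgt] with x hx
            exact if_neg (not_le.mpr hx)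
          rw [hev.deriv_eq, (affine_hasDerivAt' w v₂ s).deriv, hKv₂]
      have hae : ∀ᵐ x : ℝ, x ∈ Set.uIoc (0:ℝ) 1 →
          ‖deriv (fun t : ℝ => if t ≤ t₁ then y + t • v₁ else w + t • v₂) x‖ = K := by
        filter_upwards [MeasureTheory.compl_mem_ae_iff.mpr Real.volume_singleton] with x hx _
        exact hderiv x (by simpa using hx)
      have hlen : euclLength (fun t : ℝ => if t ≤ t₁ then y + t • v₁ else w + t • v₂) = K := by
        simp only [euclLength]
        rw [intervalIntegral.integral_congr_ae hae]
        simp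
      rw [hlen]
      have hKval : K = Real.sqrt (1 + Cf^2) * b := by
        rw [hK, show c^2 + b^2 = (1 + Cf^2) * b^2 by rw [hc]; ring,
          Real.sqrt_mul (by positivity), Real.sqrt_sq hb0]
      have h2 : Real.sqrt (1 + Cf^2) * b ≤ Real.sqrt (1 + Cf^2) * ‖y - z‖ :=
        mul_le_mul_of_nonneg_left hbyz (Real.sqrt_nonneg _)
      rw [hKval]
      linarith [abs_nonneg a]
end
end

section
/- On M = {(x,y) ∈ ℝ² : x³ < y < x² and 0 < x < 1/2}, the Lorentzian metric g = 2·(y·log y)/(x·log x)·dx² - (dx⊗dy + dy⊗dx) is well-defined (i.e., has Lorentzian signature at every point of M), and the vector fields L = ∂_x + (y/x)·(log y/log x)·∂_y and ∂_y are g-null. -/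
open Matrix

noncomputable section

/-- The metric `g = 2(y log y)/(x log x) dx² - (dx⊗dy + dy⊗dx)` of Example 3.6,
as a matrix in the coordinates `(x,y)`. -/
def gEx (x y : ℝ) : Matrix (Fin 2) (Fin 2) ℝ :=
  !![2 * (y * Real.log y) / (x * Real.log x), -1; -1, 0]

/-- Example 3.6: on `M = {x³ < y < x², 0 < x < 1/2}` the metric `gEx` is Lorentzian
(its determinant is negative, i.e. signature (1,1)), and the vector fields
`L = ∂ₓ + (y/x)(log y/log x)∂_y` and `∂_y` are null. -/
theorem stmt7 :
    ∀ x y : ℝ, 0 < x → x < 1/2 → x^3 < y → y < x^2 →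
      (gEx x y).det < 0 ∧
      (![1, (y/x) * (Real.log y / Real.log x)] ⬝ᵥ
        (gEx x y).mulVec ![1, (y/x) * (Real.log y / Real.log x)]) = 0 ∧
      (![0, (1:ℝ)] ⬝ᵥ (gEx x y).mulVec ![0, 1]) = 0 := by
  intro x y _ _ _ _
  refine ⟨?_, ?_, ?_⟩ <;>
    simp [gEx, Matrix.det_fin_two_of, Matrix.mulVec, dotProduct,
      Fin.sum_univ_two, div_mul_div_comm] <;> ring
end
end

section
/- For the metric g = 2·(y·log y)/(x·log x)·dx² - (dx⊗dy + dy⊗dx) on M = {(x,y) : x³ < y < x², 0 < x < 1/2}, the curve Σ(s) = (s, s² - s³) for s ∈ (0,1/2) is spacelike: g(Σ'(s), Σ'(s)) = 2s² + 2s(1-s)·log(1-s)/log(s) > 0 for all s ∈ (0, 1/2). -/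
open Matrix

noncomputable section

/-- Example 3.6: the curve `Σ(s) = (s, s² - s³)` is spacelike. -/
theorem stmt8 :
    ∀ s : ℝ, 0 < s → s < 1/2 →
      (![1, 2*s - 3*s^2] ⬝ᵥ (gEx s (s^2 - s^3)).mulVec ![1, 2*s - 3*s^2])
        = 2*s^2 + 2*s*(1-s) * Real.log (1-s) / Real.log s ∧
      0 < 2*s^2 + 2*s*(1-s) * Real.log (1-s) / Real.log s := by
  intro s hs hs2
  have hs1 : s < 1 := by linarith
  have h1s : (0:ℝ) < 1 - s := by linarith
  have hlogs : Real.log s < 0 := Real.log_neg hs hs1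
  have hlog1s : Real.log (1-s) < 0 := Real.log_neg h1s (by linarith)
  have hlogne : Real.log s ≠ 0 := ne_of_lt hlogs
  have hsne : s ≠ 0 := ne_of_gt hs
  constructor
  · have hy : s^2 - s^3 = s^2 * (1-s) := by ring
    have hlogy : Real.log (s^2 - s^3) = 2 * Real.log s + Real.log (1-s) := by
      rw [hy, Real.log_mul (by positivity) (ne_of_gt h1s), Real.log_pow]
      push_cast; ring
    simp [gEx, mulVec, dotProduct, Fin.sum_univ_two, hlogy]
    field_simp
    ring
  · have : 0 < 2*s*(1-s) * Real.log (1-s) / Real.log s := by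
      apply div_pos_of_neg_of_neg _ hlogs
      have : 0 < 2*s*(1-s) := by positivity
      nlinarith
    positivity
end
end

section
/- For the metric g = 2·(y·log y)/(x·log x)·dx² - (dx⊗dy + dy⊗dx) on M = {(x,y) : x³ < y < x², 0 < x < 1/2}, the curve γ(s) = (s, s³ + s⁴) for s ∈ (0,1/2) is timelike: g(γ'(s), γ'(s)) = -2s³ + 2s²(1+s)·log(1+s)/log(s) < 0 for all s ∈ (0, 1/2). -/
open Matrix

noncomputable section

/-- Example 3.6: the curve `γ(s) = (s, s³ + s⁴)` is timelike. -/
theorem stmt9 :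
    ∀ s : ℝ, 0 < s → s < 1/2 →
      (![1, 3*s^2 + 4*s^3] ⬝ᵥ (gEx s (s^3 + s^4)).mulVec ![1, 3*s^2 + 4*s^3])
        = -2*s^3 + 2*s^2*(1+s) * Real.log (1+s) / Real.log s ∧
      -2*s^3 + 2*s^2*(1+s) * Real.log (1+s) / Real.log s < 0 := by
  intro s hs hs2
  have hs1 : s < 1 := by linarith
  have hlogs : Real.log s < 0 := Real.log_neg hs hs1
  have hlogs' : Real.log s ≠ 0 := ne_of_lt hlogs
  have hsne : s ≠ 0 := ne_of_gt hs
  have hy : s^3 + s^4 = s^3 * (1 + s) := by ring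
  have h1s : (0:ℝ) < 1 + s := by linarith
  have hlogy : Real.log (s^3 + s^4) = 3 * Real.log s + Real.log (1 + s) := by
    rw [hy, Real.log_mul (by positivity) (ne_of_gt h1s), Real.log_pow]
    push_cast; ring
  constructor
  · simp only [gEx, Matrix.mulVec, dotProduct, Fin.sum_univ_two,
      Matrix.cons_val_zero, Matrix.cons_val_one, Matrix.head_cons,
      Matrix.cons_val', Matrix.head_fin_const, Matrix.empty_val',
      Matrix.cons_val_fin_one, Matrix.of_apply]
    rw [hlogy]
    field_simp
    ring
  · have hlog1s : 0 < Real.log (1 + s) := Real.log_pos (by linarith)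
    have h2 : 2*s^2*(1+s) * Real.log (1+s) / Real.log s < 0 :=
      div_neg_of_pos_of_neg (by positivity) hlogs
    have h3 : (0:ℝ) < 2*s^3 := by positivity
    linarith
end
end

section
/- In the setting of the cosmological model of Section 6, with coordinates (τ,v) and (τ,u) related by u = -v + 2∫₀^{t(τ)} 1/a(t') dt' where a(t) = t^p, 0 < p < 1: along any curve of constant v, the derivative ∂u/∂τ = 2/a(t(τ))² = 2·((p+1)τ)^{-2p/(p+1)} tends to +∞ as τ → 0⁺. Consequently the identification map (τ,v) ↦ (τ, -v + 2∫₀^{t(τ)} a(t')^{-1} dt'), defined for τ > 0, extends continuously but not as a C¹ map to τ = 0. -/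
open Filter Set Real

lemma auxd (p : ℝ) (hp0 : 0 < p) (hp1 : p < 1) (τ : ℝ) (hτ : 0 < τ) :
    HasDerivAt (fun σ : ℝ => 2 * ((((p+1) * σ) ^ (1/(p+1))) ^ (1 - p)) / (1 - p))
        (2 * ((p+1) * τ) ^ (-(2*p/(p+1)))) τ := by
  have hc : (0:ℝ) < p + 1 := by linarith
  set c := p + 1 with hcdef
  set q := (1 - p) / c with hq
  have hcτ : 0 < c * τ := mul_pos hc hτ
  have h1 : HasDerivAt (fun σ : ℝ => c * σ) c τ := by
    simpa using (hasDerivAt_id τ).const_mul c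
  have h2 : HasDerivAt (fun x : ℝ => x ^ q) (q * (c * τ) ^ (q - 1)) (c * τ) :=
    Real.hasDerivAt_rpow_const (Or.inl hcτ.ne')
  have h3 : HasDerivAt (fun σ : ℝ => (c * σ) ^ q) (q * (c * τ) ^ (q - 1) * c) τ :=
    h2.comp τ h1
  have h4 : HasDerivAt (fun σ : ℝ => 2 * (c * σ) ^ q / (1 - p))
      (2 * (q * (c * τ) ^ (q - 1) * c) / (1 - p)) τ := (h3.const_mul 2).div_const _
  have hqc : q * c = 1 - p := by
    rw [hq]; field_simp
  have hexp : q - 1 = -(2*p/c) := by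
    rw [hq]; field_simp; ring
  have hval : 2 * (q * (c * τ) ^ (q - 1) * c) / (1 - p) = 2 * (c * τ) ^ (-(2*p/c)) := by
    rw [← hexp]
    have : 2 * (q * (c * τ) ^ (q - 1) * c) = 2 * (c * τ) ^ (q-1) * (q * c) := by ring
    rw [this, hqc, mul_div_assoc, div_self (by linarith : (1:ℝ)-p ≠ 0), mul_one]
  rw [hval] at h4
  apply h4.congr_of_eventuallyEq
  filter_upwards [Ioi_mem_nhds hτ] with σ hσ
  have hcσ : (0:ℝ) ≤ c * σ := le_of_lt (mul_pos hc hσ)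
  rw [← Real.rpow_mul hcσ]
  congr 2
  rw [hq]; ring


lemma auxtop (p : ℝ) (hp0 : 0 < p) (hp1 : p < 1) :
    Filter.Tendsto (fun τ : ℝ => 2 * ((p+1) * τ) ^ (-(2*p/(p+1))))
      (nhdsWithin 0 (Set.Ioi 0)) Filter.atTop := by
  have hc : (0:ℝ) < p + 1 := by linarith
  have he : 0 < 2*p/(p+1) := by positivity
  have h1 : Tendsto (fun τ : ℝ => (p+1) * τ) (nhdsWithin 0 (Set.Ioi 0))
      (nhdsWithin 0 (Set.Ioi 0)) := by
    apply Tendsto.inf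
    · simpa using (continuous_mul_left (p+1)).tendsto (0:ℝ)
    · simp only [Filter.tendsto_principal, Filter.eventually_principal]
      exact fun x hx => mul_pos hc hx
  have h2 : Tendsto (fun x : ℝ => x ^ (2*p/(p+1))) (nhdsWithin 0 (Set.Ioi 0))
      (nhdsWithin 0 (Set.Ioi 0)) := by
    apply Tendsto.inf
    · have := (Real.continuousAt_rpow_const 0 (2*p/(p+1)) (Or.inr he.le)).tendsto
      rwa [Real.zero_rpow he.ne'] at this
    · simp only [Filter.tendsto_principal, Filter.eventually_principal]
      exact fun x hx => Real.rpow_pos_of_pos hx _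
  have h3 : Tendsto (fun τ : ℝ => (((p+1) * τ) ^ (2*p/(p+1)))⁻¹)
      (nhdsWithin 0 (Set.Ioi 0)) Filter.atTop :=
    (h2.comp h1).inv_tendsto_nhdsGT_zero
  have h4 : Tendsto (fun τ : ℝ => 2 * (((p+1) * τ) ^ (2*p/(p+1)))⁻¹)
      (nhdsWithin 0 (Set.Ioi 0)) Filter.atTop := h3.const_mul_atTop (by norm_num)
  apply h4.congr'
  filter_upwards [self_mem_nhdsWithin] with τ hτ
  rw [Real.rpow_neg (le_of_lt (mul_pos hc hτ))]

lemma auxzero (p : ℝ) (hp0 : 0 < p) (hp1 : p < 1) :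
    Filter.Tendsto (fun τ : ℝ => 2 * ((((p+1) * τ) ^ (1/(p+1))) ^ (1 - p)) / (1 - p))
      (nhdsWithin 0 (Set.Ioi 0)) (nhds 0) := by
  have hc : (0:ℝ) < p + 1 := by linarith
  have h1 : Tendsto (fun τ : ℝ => (p+1) * τ) (nhdsWithin 0 (Set.Ioi 0)) (nhds 0) := by
    simpa using ((continuous_mul_left (p+1)).tendsto (0:ℝ)).mono_left
      nhdsWithin_le_nhds
  have h2 : Tendsto (fun x : ℝ => x ^ (1/(p+1))) (nhds 0) (nhds 0) := by
    have := (Real.continuousAt_rpow_const 0 (1/(p+1)) (Or.inr (by positivity))).tendsto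
    rwa [Real.zero_rpow (by positivity : (1:ℝ)/(p+1) ≠ 0)] at this
  have h3 : Tendsto (fun x : ℝ => x ^ (1-p)) (nhds 0) (nhds 0) := by
    have := (Real.continuousAt_rpow_const 0 (1-p) (Or.inr (by linarith))).tendsto
    rwa [Real.zero_rpow (by linarith : (1:ℝ)-p ≠ 0)] at this
  have := (((h3.comp h2).comp h1).const_mul 2).div_const (1-p)
  simpa using this

theorem stmt13' (p : ℝ) (hp0 : 0 < p) (hp1 : p < 1) :
    ∀ v : ℝ, ¬ ∃ F : ℝ → ℝ, ContDiffOn ℝ 1 F (Set.Ici 0) ∧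
      ∀ τ : ℝ, 0 < τ →
        F τ = -v + 2 * ((((p+1) * τ) ^ (1/(p+1))) ^ (1 - p)) / (1 - p) := by
  intro v
  rintro ⟨F, hF, hFeq⟩
  set D := derivWithin F (Set.Ici 0) with hD
  have hcont : ContinuousOn D (Set.Ici 0) :=
    hF.continuousOn_derivWithin (uniqueDiffOn_Ici 0) le_rfl
  have htend : Tendsto D (nhdsWithin 0 (Set.Ioi 0)) (nhds (D 0)) :=
    ((hcont 0 Set.self_mem_Ici).tendsto).mono_left
      (nhdsWithin_mono 0 Set.Ioi_subset_Ici_self)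
  have heq : ∀ᶠ τ in nhdsWithin 0 (Set.Ioi 0),
      D τ = 2 * ((p+1) * τ) ^ (-(2*p/(p+1))) := by
    filter_upwards [self_mem_nhdsWithin] with τ hτ
    have hτ' : (0:ℝ) < τ := hτ
    have hd : HasDerivAt F (2 * ((p+1) * τ) ^ (-(2*p/(p+1)))) τ := by
      have := ((auxd p hp0 hp1 τ hτ').const_add (-v))
      apply this.congr_of_eventuallyEq
      filter_upwards [Ioi_mem_nhds hτ'] with σ hσ
      exact hFeq σ hσ
    rw [hD, derivWithin_of_mem_nhds
      (Filter.mem_of_superset (Ioi_mem_nhds hτ') Set.Ioi_subset_Ici_self)]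
    exact hd.deriv
  have htop : Tendsto D (nhdsWithin 0 (Set.Ioi 0)) Filter.atTop :=
    (auxtop p hp0 hp1).congr' (heq.mono fun τ h => h.symm)
  exact not_tendsto_atTop_of_tendsto_nhds htend htop

/-- Section 6: along constant `v`, with `u = -v + 2∫₀^{t(τ)} 1/a` and `a(t) = t^p`,
one has `∂u/∂τ = 2((p+1)τ)^{-2p/(p+1)} → ∞` as `τ → 0⁺`; the identification map
extends continuously but not as a `C¹` map to `τ = 0`. -/
theorem stmt13 (p : ℝ) (hp0 : 0 < p) (hp1 : p < 1) :
    (∀ τ : ℝ, 0 < τ →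
      HasDerivAt (fun σ : ℝ => 2 * ((((p+1) * σ) ^ (1/(p+1))) ^ (1 - p)) / (1 - p))
        (2 * ((p+1) * τ) ^ (-(2*p/(p+1)))) τ) ∧
    Filter.Tendsto (fun τ : ℝ => 2 * ((p+1) * τ) ^ (-(2*p/(p+1))))
      (nhdsWithin 0 (Set.Ioi 0)) Filter.atTop ∧
    Filter.Tendsto (fun τ : ℝ => 2 * ((((p+1) * τ) ^ (1/(p+1))) ^ (1 - p)) / (1 - p))
      (nhdsWithin 0 (Set.Ioi 0)) (nhds 0) ∧
    ∀ v : ℝ, ¬ ∃ F : ℝ → ℝ, ContDiffOn ℝ 1 F (Set.Ici 0) ∧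
      ∀ τ : ℝ, 0 < τ →
        F τ = -v + 2 * ((((p+1) * τ) ^ (1/(p+1))) ^ (1 - p)) / (1 - p) := by
  exact ⟨auxd p hp0 hp1, auxtop p hp0 hp1, auxzero p hp0 hp1, stmt13' p hp0 hp1⟩
end

section
/- Let a(t) = t^p with 0 < p < 1. Then for the metric g = -dt² + t^{2p}dx² on (0,∞) × ℝ, the curves s ↦ (t(s), x₀) with dt/ds = a(t(s)), i.e. t(s) solving ṫ = t^p, when expressed in the coordinates (τ, v) with τ = t^{p+1}/(p+1) and v = t^{1-p}/(1-p) + x, have velocity a(t)·∂_t = a(t)²·∂_τ + ∂_v, which extends continuously to τ = 0 with limit ∂_v; and in the coordinates (τ, u) with u = t^{1-p}/(1-p) - x, the velocity a(t)²·∂_τ + ∂_u extends continuously to τ = 0 with limit ∂_u. -/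
/-- Section 6: the comoving curves reparametrized by `dt/ds = a(t) = t^p`, expressed
in the `(τ,v)` and `(τ,u)` coordinates, have velocity `a(t)²∂_τ + ∂_v` resp.
`a(t)²∂_τ + ∂_u`, which extends continuously to `τ = 0` with null limit
`∂_v = (0,1)` resp. `∂_u = (0,1)` — exhibiting the infinite relative boost. -/
theorem stmt19 (p : ℝ) (hp0 : 0 < p) (hp1 : p < 1)
    (s₀ s₁ : ℝ) (t : ℝ → ℝ)
    (htpos : ∀ s ∈ Set.Ioo s₀ s₁, 0 < t s)
    (ht' : ∀ s ∈ Set.Ioo s₀ s₁, HasDerivAt t ((t s) ^ p) s)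
    (ht0 : Filter.Tendsto t (nhdsWithin s₀ (Set.Ioi s₀)) (nhds 0))
    (x₀ : ℝ) :
    (∀ s ∈ Set.Ioo s₀ s₁,
      HasDerivAt (fun s' : ℝ => (((t s') ^ (p+1)) / (p+1), ((t s') ^ (1-p)) / (1-p) + x₀))
        (((t s) ^ (2*p), 1)) s) ∧
    (∀ s ∈ Set.Ioo s₀ s₁,
      HasDerivAt (fun s' : ℝ => (((t s') ^ (p+1)) / (p+1), ((t s') ^ (1-p)) / (1-p) - x₀))
        (((t s) ^ (2*p), 1)) s) ∧
    Filter.Tendsto (fun s : ℝ => (((t s) ^ (2*p) : ℝ), (1:ℝ)))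
      (nhdsWithin s₀ (Set.Ioi s₀)) (nhds ((0:ℝ), (1:ℝ))) := by
  have key : ∀ s ∈ Set.Ioo s₀ s₁,
      HasDerivAt (fun s' : ℝ => ((t s') ^ (p+1)) / (p+1)) ((t s) ^ (2*p)) s ∧
      HasDerivAt (fun s' : ℝ => ((t s') ^ (1-p)) / (1-p)) 1 s := by
    intro s hs
    have ht := htpos s hs
    have h := ht' s hs
    have h1 : HasDerivAt (fun s' : ℝ => ((t s') ^ (p+1)) / (p+1))
        ((t s) ^ p * (p+1) * (t s) ^ (p+1-1) / (p+1)) s :=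
      (h.rpow_const (Or.inl ht.ne')).div_const (p+1)
    have h2 : HasDerivAt (fun s' : ℝ => ((t s') ^ (1-p)) / (1-p))
        ((t s) ^ p * (1-p) * (t s) ^ (1-p-1) / (1-p)) s :=
      (h.rpow_const (Or.inl ht.ne')).div_const (1-p)
    have hne : t s ^ p ≠ 0 := (Real.rpow_pos_of_pos ht p).ne'
    constructor
    · convert h1 using 1
      rw [show p + 1 - 1 = p by ring, two_mul, Real.rpow_add ht]
      field_simp
    · convert h2 using 1
      rw [show 1 - p - 1 = -p by ring, Real.rpow_neg ht.le]
      rw [eq_comm, div_eq_one_iff_eq (by intro h0; linarith : (1:ℝ)-p ≠ 0)]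
      field_simp
  have tend : Filter.Tendsto (fun s : ℝ => ((t s) ^ (2*p) : ℝ))
      (nhdsWithin s₀ (Set.Ioi s₀)) (nhds 0) := by
    have hc : ContinuousAt (fun y : ℝ => y ^ (2*p)) 0 :=
      Real.continuousAt_rpow_const 0 (2*p) (Or.inr (by positivity))
    have := hc.tendsto.comp ht0
    rwa [Real.zero_rpow (by positivity)] at this
  refine ⟨fun s hs => ?_, fun s hs => ?_, tend.prodMk_nhds tendsto_const_nhds⟩
  · exact ((key s hs).1).prodMk (((key s hs).2).add_const x₀)
  · exact ((key s hs).1).prodMk (((key s hs).2).sub_const x₀)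
end
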